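/- Let k ≥ 1, let r be a nonzero integer, and let C ≥ 0 be a real number. Define π^k_{2r}(x) = #{p ≤ x : p prime and p^k + 2r prime}, θ^k_{2r}(x) = ∑_{p ≤ x, p^k + 2r prime} (log p)², and li₂(x) = ∫₂^x dt/(log t)². Then θ^k_{2r}(x)/x → C as x → ∞ if and only if π^k_{2r}(x)/li₂(x) → C as x → ∞. -/

import Mathlib

open Filter Topology

/-- `π^k_{2r}(x) = #{p ≤ x : p prime and p^k + 2r prime}`. -/
noncomputable def primePairCount (k : ℕ) (r : ℤ) (x : ℝ) : ℕ :=
  ((Finset.range (⌊x⌋₊ + 1)).filter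
    (fun p : ℕ => p.Prime ∧ ((p : ℤ) ^ k + 2 * r).toNat.Prime)).card

/-- `θ^k_{2r}(x) = ∑_{p ≤ x, p^k + 2r prime} (log p)²`. -/
noncomputable def primePairTheta (k : ℕ) (r : ℤ) (x : ℝ) : ℝ :=
  ∑ p ∈ (Finset.range (⌊x⌋₊ + 1)).filter
      (fun p : ℕ => p.Prime ∧ ((p : ℤ) ^ k + 2 * r).toNat.Prime),
    (Real.log p) ^ 2

/-- `li₂(x) = ∫₂^x dt/(log t)²`. -/
noncomputable def li2 (x : ℝ) : ℝ := ∫ t in (2 : ℝ)..x, 1 / (Real.log t) ^ 2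

namespace ThetaPiAux

open MeasureTheory Finset Real

/-! ### Generic partial-sum machinery -/

/-- Partial sum of `c` up to `⌊x⌋₊`. -/
noncomputable def S (c : ℕ → ℝ) (x : ℝ) : ℝ := ∑ n ∈ Finset.Icc 0 ⌊x⌋₊, c n

lemma S_measurable (c : ℕ → ℝ) : Measurable (S c) :=
  (measurable_from_nat (f := fun n => ∑ i ∈ Finset.Icc 0 n, c i)).comp Nat.measurable_floor

lemma S_nonneg (c : ℕ → ℝ) (hc : ∀ n, 0 ≤ c n) (x : ℝ) : 0 ≤ S c x :=
  Finset.sum_nonneg fun n _ => hc n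

lemma S_mono (c : ℕ → ℝ) (hc : ∀ n, 0 ≤ c n) : Monotone (S c) := fun a b hab =>
  Finset.sum_le_sum_of_subset_of_nonneg
    (Finset.Icc_subset_Icc_right (Nat.floor_le_floor hab)) (fun n _ _ => hc n)

lemma S_eq_zero (c : ℕ → ℝ) (hc0 : c 0 = 0) (hc1 : c 1 = 0) {x : ℝ} (hx : x < 2) :
    S c x = 0 := by
  have : ⌊x⌋₊ ≤ 1 := by
    by_contra hcon
    push_neg at hcon
    have h2 : (2:ℕ) ≤ ⌊x⌋₊ := hcon
    have := (Nat.le_floor_iff' (by omega)).mp h2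
    norm_num at this
    linarith
  have hIcc : Finset.Icc 0 ⌊x⌋₊ ⊆ {0, 1} := by
    intro n hn
    simp only [Finset.mem_Icc] at hn
    have : n ≤ 1 := hn.2.trans this
    interval_cases n <;> simp
  rw [S]
  refine Finset.sum_eq_zero fun n hn => ?_
  have := hIcc hn
  simp only [Finset.mem_insert, Finset.mem_singleton] at this
  rcases this with rfl | rfl
  · exact hc0
  · exact hc1

lemma integrableOn_mul_S (c : ℕ → ℝ) (hc : ∀ n, 0 ≤ c n) {φ : ℝ → ℝ} {a x : ℝ}
    (hφ : ContinuousOn φ (Set.Icc a x)) :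
    IntegrableOn (fun t => φ t * S c t) (Set.Ioc a x) := by
  rcases le_or_gt x a with h | h
  · rw [Set.Ioc_eq_empty (not_lt.mpr h)]
    exact integrableOn_empty
  -- bound |φ| on the compact set
  obtain ⟨M, hM⟩ : ∃ M, ∀ t ∈ Set.Icc a x, ‖φ t‖ ≤ M :=
    (isCompact_Icc.exists_bound_of_continuousOn hφ)
  have hMS : ∀ t ∈ Set.Ioc a x, ‖φ t * S c t‖ ≤ M * S c x := by
    intro t ht
    rw [norm_mul]
    have h1 : ‖φ t‖ ≤ M := hM t (Set.Ioc_subset_Icc_self ht)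
    have h2 : ‖S c t‖ ≤ S c x := by
      rw [Real.norm_eq_abs, abs_of_nonneg (S_nonneg c hc t)]
      exact S_mono c hc ht.2
    exact mul_le_mul h1 h2 (norm_nonneg _) ((norm_nonneg _).trans h1)
  refine ⟨((hφ.mono Set.Ioc_subset_Icc_self).aestronglyMeasurable measurableSet_Ioc).mul
      ((S_measurable c).aestronglyMeasurable.restrict), ?_⟩
  exact HasFiniteIntegral.restrict_of_bounded (C := M * S c x) (by simp)
    ((ae_restrict_iff' measurableSet_Ioc).mpr (.of_forall hMS))

/-- the key Cesàro-type limit lemma -/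
lemma key (u w W : ℝ → ℝ) (hw0 : ∀ t, 0 ≤ w t)
    (hwint : ∀ x, IntegrableOn w (Set.Ioc 2 x))
    (huint : ∀ x, IntegrableOn (fun t => u t * w t) (Set.Ioc 2 x))
    (hbound : ∀ T x : ℝ, 2 ≤ T → T ≤ x → (∫ t in Set.Ioc T x, w t) ≤ W x)
    (hW : Tendsto W atTop atTop)
    (hu : Tendsto u atTop (𝓝 0)) :
    Tendsto (fun x => (∫ t in Set.Ioc 2 x, u t * w t) / W x) atTop (𝓝 0) := by
  rw [Metric.tendsto_nhds]
  intro ε hε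
  -- choose T beyond which |u| ≤ ε/2
  have hu' : ∀ᶠ t in atTop, |u t| ≤ ε / 2 := by
    have := Metric.tendsto_nhds.mp hu (ε / 2) (by positivity)
    filter_upwards [this] with t ht
    rw [Real.dist_eq, sub_zero] at ht
    exact ht.le
  obtain ⟨T₀, hT₀⟩ := eventually_atTop.mp hu'
  set T : ℝ := max T₀ 2 with hT
  have hT2 : (2:ℝ) ≤ T := le_max_right _ _
  set K : ℝ := ∫ t in Set.Ioc 2 T, |u t * w t| with hK
  have hK0 : 0 ≤ K := integral_nonneg fun t => abs_nonneg _
  have hWev : ∀ᶠ x in atTop, max (2 * (K + 1) / ε) 1 ≤ W x := hW.eventually_ge_atTop _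
  filter_upwards [hWev, eventually_ge_atTop T] with x hWx hxT
  have hWpos : 0 < W x := lt_of_lt_of_le zero_lt_one ((le_max_right _ _).trans hWx)
  rw [Real.dist_eq, sub_zero, abs_div, abs_of_pos hWpos]
  -- split the integral
  have hsplit : (∫ t in Set.Ioc 2 x, u t * w t) =
      (∫ t in Set.Ioc 2 T, u t * w t) + ∫ t in Set.Ioc T x, u t * w t := by
    rw [← setIntegral_union ((Set.Ioc_disjoint_Ioc_of_le le_rfl)) measurableSet_Ioc
      (huint T) ((huint x).mono_set (Set.Ioc_subset_Ioc_left hT2)),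
      Set.Ioc_union_Ioc_eq_Ioc hT2 hxT]
  have habs_le : ∀ (s : Set ℝ), |∫ t in s, u t * w t| ≤ ∫ t in s, |u t * w t| := by
    intro s
    simpa [Real.norm_eq_abs, abs_mul] using
      norm_integral_le_integral_norm (μ := volume.restrict s) (fun t => u t * w t)
  have h1 : |∫ t in Set.Ioc 2 T, u t * w t| ≤ K := habs_le _
  have h2 : |∫ t in Set.Ioc T x, u t * w t| ≤ ε / 2 * W x := by
    have hint1 : IntegrableOn (fun t => |u t * w t|) (Set.Ioc T x) :=
      ((huint x).mono_set (Set.Ioc_subset_Ioc_left hT2)).abs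
    have hint2 : IntegrableOn (fun t => ε / 2 * w t) (Set.Ioc T x) :=
      ((hwint x).mono_set (Set.Ioc_subset_Ioc_left hT2)).const_mul _
    calc |∫ t in Set.Ioc T x, u t * w t| ≤ ∫ t in Set.Ioc T x, |u t * w t| := habs_le _
      _ ≤ ∫ t in Set.Ioc T x, ε / 2 * w t := by
          refine setIntegral_mono_on hint1 hint2 measurableSet_Ioc fun t ht => ?_
          rw [abs_mul, abs_of_nonneg (hw0 t)]
          exact mul_le_mul_of_nonneg_right
            (hT₀ t ((le_max_left _ _).trans ht.1.le)) (hw0 t)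
      _ = ε / 2 * ∫ t in Set.Ioc T x, w t := by rw [integral_const_mul]
      _ ≤ ε / 2 * W x := by
          refine mul_le_mul_of_nonneg_left (hbound T x hT2 hxT) (by positivity)
  have habs : |∫ t in Set.Ioc 2 x, u t * w t| ≤ K + ε / 2 * W x := by
    rw [hsplit]
    exact (abs_add_le _ _).trans (add_le_add h1 h2)
  have hdiv : |∫ t in Set.Ioc 2 x, u t * w t| / W x ≤ K / W x + ε / 2 := by
    calc |∫ t in Set.Ioc 2 x, u t * w t| / W x ≤ (K + ε / 2 * W x) / W x := by
          exact div_le_div_of_nonneg_right habs hWpos.le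
      _ = K / W x + ε / 2 := by
          rw [add_div]
          congr 1
          rw [mul_div_assoc, div_self hWpos.ne', mul_one]
  have hKW : K / W x < ε / 2 := by
    have hWge : 2 * (K + 1) / ε ≤ W x := (le_max_left _ _).trans hWx
    rw [div_lt_iff₀ hWpos]
    calc K < K + 1 := lt_add_one K
      _ = ε / 2 * (2 * (K + 1) / ε) := by field_simp
      _ ≤ ε / 2 * W x := mul_le_mul_of_nonneg_left hWge (by positivity)
  calc |∫ t in Set.Ioc 2 x, u t * w t| / W x ≤ K / W x + ε / 2 := hdiv
    _ < ε / 2 + ε / 2 := by linarith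
    _ = ε := by ring


/-! ### Calculus facts -/

noncomputable def li2' (x : ℝ) : ℝ := ∫ t in (2 : ℝ)..x, 1 / (Real.log t) ^ 2

/-- the weight appearing in the `π`-from-`θ` Abel summation -/
noncomputable def g1 (t : ℝ) : ℝ := 2 * Real.log t * t⁻¹ / ((Real.log t) ^ 2) ^ 2

/-- the weight appearing in the `θ`-from-`π` Abel summation -/
noncomputable def g2 (t : ℝ) : ℝ := 2 * Real.log t * t⁻¹

lemma hasDerivAt_logsq {t : ℝ} (ht : 0 < t) :
    HasDerivAt (fun t => (Real.log t) ^ 2) (2 * Real.log t * t⁻¹) t := by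
  have h := ((Real.hasDerivAt_log ht.ne').fun_pow 2)
  simpa using h

lemma log_pos_of_gt_one {t : ℝ} (ht : 1 < t) : 0 < Real.log t := Real.log_pos ht

lemma hasDerivAt_invlogsq {t : ℝ} (ht : 1 < t) :
    HasDerivAt (fun t => ((Real.log t) ^ 2)⁻¹) (-(g1 t)) t := by
  have h := (hasDerivAt_logsq (lt_trans one_pos ht)).fun_inv
    (pow_ne_zero 2 (log_pos_of_gt_one ht).ne')
  simpa [g1, neg_div] using h

lemma continuousOn_g1 {a x : ℝ} (ha : 1 < a) : ContinuousOn g1 (Set.Icc a x) := by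
  intro t ht
  have h1 : (1:ℝ) < t := lt_of_lt_of_le ha ht.1
  have h0 : t ≠ 0 := (lt_trans one_pos h1).ne'
  have hl : Real.log t ≠ 0 := (log_pos_of_gt_one h1).ne'
  exact ContinuousAt.continuousWithinAt <| by
    apply ContinuousAt.div
    · exact (continuousAt_const.mul (Real.continuousAt_log h0)).mul (continuousAt_inv₀ h0)
    · exact ((Real.continuousAt_log h0).pow 2).pow 2
    · positivity

lemma continuousOn_g2 {a x : ℝ} (ha : 0 < a) : ContinuousOn g2 (Set.Icc a x) := by
  intro t ht
  have h0 : t ≠ 0 := (lt_of_lt_of_le ha ht.1).ne'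
  exact ContinuousAt.continuousWithinAt <|
    (continuousAt_const.mul (Real.continuousAt_log h0)).mul (continuousAt_inv₀ h0)

lemma continuousOn_invlogsq {a x : ℝ} (ha : 1 < a) :
    ContinuousOn (fun t => ((Real.log t) ^ 2)⁻¹) (Set.Icc a x) := by
  intro t ht
  have h1 : (1:ℝ) < t := lt_of_lt_of_le ha ht.1
  have h0 : t ≠ 0 := (lt_trans one_pos h1).ne'
  exact ContinuousAt.continuousWithinAt <| ContinuousAt.inv₀
    ((Real.continuousAt_log h0).pow 2) (pow_ne_zero 2 (log_pos_of_gt_one h1).ne')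

lemma hasDerivAt_li2' {t : ℝ} (ht : 1 < t) :
    HasDerivAt li2' (1 / (Real.log t) ^ 2) t := by
  have hmeas : Measurable (fun t : ℝ => 1 / (Real.log t) ^ 2) :=
    (measurable_const.div ((Real.measurable_log).pow_const 2))
  have hcont : ContinuousAt (fun t : ℝ => 1 / (Real.log t) ^ 2) t := by
    have h0 : t ≠ 0 := (lt_trans one_pos ht).ne'
    exact continuousAt_const.div ((Real.continuousAt_log h0).pow 2)
      (pow_ne_zero 2 (log_pos_of_gt_one ht).ne')
  have hInt : IntervalIntegrable (fun t : ℝ => 1 / (Real.log t) ^ 2) volume 2 t := by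
    apply ContinuousOn.intervalIntegrable
    intro s hs
    have h1 : (1:ℝ) < s := by
      rcases le_total 2 t with h | h
      · rw [Set.uIcc_of_le h] at hs; linarith [hs.1]
      · rw [Set.uIcc_of_ge h] at hs; linarith [hs.1]
    have h0 : s ≠ 0 := (lt_trans one_pos h1).ne'
    exact ContinuousAt.continuousWithinAt <| continuousAt_const.div
      ((Real.continuousAt_log h0).pow 2) (pow_ne_zero 2 (log_pos_of_gt_one h1).ne')
  exact intervalIntegral.integral_hasDerivAt_right hInt
    (hmeas.stronglyMeasurable.stronglyMeasurableAtFilter) hcont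

lemma li2'_continuousAt {t : ℝ} (ht : 1 < t) : ContinuousAt li2' t :=
  (hasDerivAt_li2' ht).continuousAt

lemma li2'_eq_setIntegral {x : ℝ} (hx : 2 ≤ x) :
    li2' x = ∫ t in Set.Ioc 2 x, ((Real.log t) ^ 2)⁻¹ := by
  rw [li2', intervalIntegral.integral_of_le hx]
  exact integral_congr_ae (.of_forall fun t => one_div _)

lemma li2'_identity {x : ℝ} (hx : 2 ≤ x) :
    li2' x = x * ((Real.log x) ^ 2)⁻¹ - 2 * ((Real.log 2) ^ 2)⁻¹
      + ∫ t in Set.Ioc 2 x, g1 t * t := by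
  -- F t = t * (log t)⁻² has derivative (log t)⁻² - g1 t * t for t > 1
  have hF : ∀ t ∈ Set.uIcc (2:ℝ) x, HasDerivAt (fun t => t * ((Real.log t) ^ 2)⁻¹)
      (((Real.log t) ^ 2)⁻¹ - g1 t * t) t := by
    intro t htmem
    rw [Set.uIcc_of_le hx] at htmem
    have h1 : (1:ℝ) < t := by linarith [htmem.1]
    have h := (hasDerivAt_id t).fun_mul (hasDerivAt_invlogsq h1)
    refine h.congr_deriv (Eq.symm ?_)
    simp [id]
    ring
  have hcont : ContinuousOn (fun t => ((Real.log t) ^ 2)⁻¹ - g1 t * t) (Set.Icc 2 x) :=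
    (continuousOn_invlogsq one_lt_two).sub
      ((continuousOn_g1 one_lt_two).mul continuousOn_id)
  have hInt : IntervalIntegrable (fun t => ((Real.log t) ^ 2)⁻¹ - g1 t * t) volume 2 x := by
    rw [intervalIntegrable_iff_integrableOn_Icc_of_le hx]
    exact hcont.integrableOn_compact isCompact_Icc
  have hFTC := intervalIntegral.integral_eq_sub_of_hasDerivAt hF hInt
  have hsplit : ∫ t in (2:ℝ)..x, (((Real.log t) ^ 2)⁻¹ - g1 t * t) =
      (∫ t in (2:ℝ)..x, ((Real.log t) ^ 2)⁻¹) - ∫ t in (2:ℝ)..x, g1 t * t := by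
    apply intervalIntegral.integral_sub
    · rw [intervalIntegrable_iff_integrableOn_Icc_of_le hx]
      exact (continuousOn_invlogsq one_lt_two).integrableOn_compact isCompact_Icc
    · rw [intervalIntegrable_iff_integrableOn_Icc_of_le hx]
      exact ((continuousOn_g1 one_lt_two).mul continuousOn_id).integrableOn_compact isCompact_Icc
  have hli : li2' x = ∫ t in (2:ℝ)..x, ((Real.log t) ^ 2)⁻¹ := by
    rw [li2']
    exact intervalIntegral.integral_congr fun t _ => one_div _
  have hIoc : ∫ t in (2:ℝ)..x, g1 t * t = ∫ t in Set.Ioc 2 x, g1 t * t :=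
    intervalIntegral.integral_of_le hx
  rw [hsplit, ← hli, hIoc] at hFTC
  rw [sub_eq_iff_eq_add] at hFTC
  rw [hFTC]; try ring

lemma li2'_id2 {x : ℝ} (hx : 2 ≤ x) :
    (Real.log x) ^ 2 * li2' x - (∫ t in Set.Ioc 2 x, g2 t * li2' t) = x - 2 := by
  have hli2cont : ContinuousOn li2' (Set.Icc 2 x) := fun t ht =>
    (li2'_continuousAt (by linarith [ht.1] : (1:ℝ) < t)).continuousWithinAt
  have hG : ∀ t ∈ Set.uIcc (2:ℝ) x, HasDerivAt (fun t => (Real.log t) ^ 2 * li2' t)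
      (g2 t * li2' t + 1) t := by
    intro t htmem
    rw [Set.uIcc_of_le hx] at htmem
    have h1 : (1:ℝ) < t := by linarith [htmem.1]
    have h := (hasDerivAt_logsq (lt_trans one_pos h1)).fun_mul (hasDerivAt_li2' h1)
    refine h.congr_deriv (Eq.symm ?_)
    rw [g2]
    have hl : Real.log t ≠ 0 := (log_pos_of_gt_one h1).ne'
    have : (Real.log t) ^ 2 * (1 / (Real.log t) ^ 2) = 1 := by
      rw [mul_one_div, div_self (pow_ne_zero 2 hl)]
    rw [this]
  have hcont : ContinuousOn (fun t => g2 t * li2' t + 1) (Set.Icc 2 x) :=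
    ((continuousOn_g2 two_pos).mul hli2cont).add continuousOn_const
  have hInt : IntervalIntegrable (fun t => g2 t * li2' t + 1) volume 2 x := by
    rw [intervalIntegrable_iff_integrableOn_Icc_of_le hx]
    exact hcont.integrableOn_compact isCompact_Icc
  have hFTC := intervalIntegral.integral_eq_sub_of_hasDerivAt hG hInt
  have h2 : li2' 2 = 0 := by simp [li2']
  rw [h2, mul_zero, sub_zero] at hFTC
  have hsplit : ∫ t in (2:ℝ)..x, (g2 t * li2' t + 1) =
      (∫ t in (2:ℝ)..x, g2 t * li2' t) + (x - 2) := by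
    rw [intervalIntegral.integral_add ?h1 intervalIntegrable_const]
    · simp
    case h1 =>
      rw [intervalIntegrable_iff_integrableOn_Icc_of_le hx]
      exact ((continuousOn_g2 two_pos).mul hli2cont).integrableOn_compact isCompact_Icc
  rw [hsplit] at hFTC
  have hIoc : ∫ t in (2:ℝ)..x, g2 t * li2' t = ∫ t in Set.Ioc 2 x, g2 t * li2' t :=
    intervalIntegral.integral_of_le hx
  rw [hIoc] at hFTC
  linarith

/-! ### Asymptotics -/

lemma g1_mul_eq {t : ℝ} (ht : 1 < t) : g1 t * t = 2 / (Real.log t) ^ 3 := by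
  have h0 : t ≠ 0 := (lt_trans one_pos ht).ne'
  have hl : Real.log t ≠ 0 := (log_pos_of_gt_one ht).ne'
  rw [g1]
  field_simp

lemma g1_mul_nonneg {t : ℝ} (ht : 1 < t) : 0 ≤ g1 t * t := by
  rw [g1_mul_eq ht]
  have := log_pos_of_gt_one ht
  positivity

lemma integrableOn_g1_mul {x : ℝ} : IntegrableOn (fun t => g1 t * t) (Set.Ioc 2 x) := by
  rcases le_or_gt (2:ℝ) x with h | h
  · exact (((continuousOn_g1 one_lt_two).mul continuousOn_id).integrableOn_compact
      isCompact_Icc).mono_set Set.Ioc_subset_Icc_self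
  · rw [Set.Ioc_eq_empty (not_lt.mpr h.le)]
    exact integrableOn_empty

lemma tendsto_logsq_div : Tendsto (fun x => (Real.log x) ^ 2 / x) atTop (𝓝 0) := by
  have := Real.tendsto_pow_log_div_mul_add_atTop 1 0 2 one_ne_zero
  refine this.congr fun x => by rw [one_mul, add_zero]

lemma tendsto_sqrt_atTop : Tendsto Real.sqrt atTop atTop :=
  (tendsto_rpow_atTop (by norm_num : (0:ℝ) < 1/2)).congr
    fun x => (Real.sqrt_eq_rpow x).symm

lemma tendsto_inv_log : Tendsto (fun x => 16 / Real.log x) atTop (𝓝 0) := by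
  have h := Real.tendsto_log_atTop.inv_tendsto_atTop
  have := h.const_mul (16:ℝ)
  rw [mul_zero] at this
  exact this.congr fun x => by rw [div_eq_mul_inv]; rfl

lemma tendsto_sqrt_term :
    Tendsto (fun x => Real.sqrt x * (2 / (Real.log 2) ^ 3) * ((Real.log x) ^ 2 / x))
      atTop (𝓝 0) := by
  have inner : Tendsto (fun y : ℝ => 2 / (Real.log 2) ^ 3 * (4 * ((Real.log y) ^ 2 / y)))
      atTop (𝓝 0) := by
    have h1 := tendsto_logsq_div.const_mul (4:ℝ)
    rw [mul_zero] at h1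
    have h2 := h1.const_mul (2 / (Real.log 2) ^ 3)
    rw [mul_zero] at h2
    exact h2
  have comp := inner.comp tendsto_sqrt_atTop
  refine comp.congr' ?_
  filter_upwards [eventually_gt_atTop (0:ℝ)] with x hx
  set s := Real.sqrt x with hsdef
  have hs : s ≠ 0 := (Real.sqrt_pos.mpr hx).ne'
  have hlog : Real.log x = 2 * Real.log s := by
    rw [hsdef, Real.log_sqrt hx.le]; ring
  have hxss : x = s * s := (Real.mul_self_sqrt hx.le).symm
  have hl2 : Real.log 2 ≠ 0 := (Real.log_pos one_lt_two).ne'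
  have hs0 : 0 ≤ s := Real.sqrt_nonneg x
  simp only [Function.comp_apply]
  rw [hlog, hxss]
  field_simp
  rw [Real.sqrt_sq hs0]
  ring

lemma J_le {x : ℝ} (hx : 4 ≤ x) :
    (∫ t in Set.Ioc 2 x, g1 t * t) ≤
      Real.sqrt x * (2 / (Real.log 2) ^ 3) + x * (16 / (Real.log x) ^ 3) := by
  have hx0 : (0:ℝ) < x := by linarith
  have h2s : (2:ℝ) ≤ Real.sqrt x := by
    rw [show (2:ℝ) = Real.sqrt 4 by
      rw [show (4:ℝ) = 2^2 by norm_num, Real.sqrt_sq (by norm_num)]]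
    exact Real.sqrt_le_sqrt hx
  have hsx : Real.sqrt x ≤ x := by
    have h := Real.sqrt_le_sqrt (show x ≤ x ^ 2 by nlinarith)
    rwa [Real.sqrt_sq hx0.le] at h
  have hlogx : 0 < Real.log x := Real.log_pos (by linarith)
  have hsplit : (∫ t in Set.Ioc 2 x, g1 t * t) =
      (∫ t in Set.Ioc 2 (Real.sqrt x), g1 t * t) + ∫ t in Set.Ioc (Real.sqrt x) x, g1 t * t := by
    rw [← setIntegral_union (Set.Ioc_disjoint_Ioc_of_le le_rfl) measurableSet_Ioc
      integrableOn_g1_mul (integrableOn_g1_mul.mono_set (Set.Ioc_subset_Ioc_left h2s)),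
      Set.Ioc_union_Ioc_eq_Ioc h2s hsx]
  have hb1 : (∫ t in Set.Ioc 2 (Real.sqrt x), g1 t * t) ≤
      (Real.sqrt x - 2) * (2 / (Real.log 2) ^ 3) := by
    have := setIntegral_mono_on (g := fun _ => (2:ℝ) / (Real.log 2) ^ 3) integrableOn_g1_mul
      (integrableOn_const measure_Ioc_lt_top.ne) measurableSet_Ioc
      (fun t ht => ?_) (s := Set.Ioc 2 (Real.sqrt x)) (μ := volume)
    · rw [setIntegral_const, Real.volume_real_Ioc_of_le (by linarith), smul_eq_mul]
        at this
      exact this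
    · have h1 : (1:ℝ) < t := by linarith [ht.1]
      rw [g1_mul_eq h1]
      have hl2 : (0:ℝ) < Real.log 2 := Real.log_pos one_lt_two
      have hlt : Real.log 2 ≤ Real.log t := Real.log_le_log two_pos ht.1.le
      apply div_le_div_of_nonneg_left (by norm_num) (by positivity)
      exact pow_le_pow_left₀ hl2.le hlt 3 |>.trans_eq rfl
  have hb2 : (∫ t in Set.Ioc (Real.sqrt x) x, g1 t * t) ≤
      (x - Real.sqrt x) * (16 / (Real.log x) ^ 3) := by
    have := setIntegral_mono_on (g := fun _ => (16:ℝ) / (Real.log x) ^ 3)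
      (integrableOn_g1_mul.mono_set (Set.Ioc_subset_Ioc_left h2s))
      (integrableOn_const measure_Ioc_lt_top.ne) measurableSet_Ioc
      (fun t ht => ?_) (s := Set.Ioc (Real.sqrt x) x) (μ := volume)
    · rw [setIntegral_const, Real.volume_real_Ioc_of_le (by linarith), smul_eq_mul]
        at this
      exact this
    · have h1 : (1:ℝ) < t := by linarith [ht.1, h2s]
      rw [g1_mul_eq h1]
      have hls : Real.log (Real.sqrt x) ≤ Real.log t :=
        Real.log_le_log (by linarith) ht.1.le
      have hlhalf : Real.log (Real.sqrt x) = Real.log x / 2 := Real.log_sqrt hx0.le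
      have hlt : Real.log x / 2 ≤ Real.log t := hlhalf ▸ hls
      have h16 : 16 / (Real.log x) ^ 3 = 2 / (Real.log x / 2) ^ 3 := by
        field_simp; ring
      rw [h16]
      apply div_le_div_of_nonneg_left (by norm_num) (by positivity)
      exact pow_le_pow_left₀ (by positivity) hlt 3
  calc (∫ t in Set.Ioc 2 x, g1 t * t) ≤
      (Real.sqrt x - 2) * (2 / (Real.log 2) ^ 3) + (x - Real.sqrt x) * (16 / (Real.log x) ^ 3) := by
        rw [hsplit]; exact add_le_add hb1 hb2
    _ ≤ Real.sqrt x * (2 / (Real.log 2) ^ 3) + x * (16 / (Real.log x) ^ 3) := by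
        have hl2 : (0:ℝ) < Real.log 2 := Real.log_pos one_lt_two
        have c1 : (0:ℝ) ≤ 2 / (Real.log 2) ^ 3 := by positivity
        have c2 : (0:ℝ) ≤ 16 / (Real.log x) ^ 3 := by positivity
        have s1 : (0:ℝ) ≤ Real.sqrt x := Real.sqrt_nonneg x
        nlinarith

lemma J_asymp :
    Tendsto (fun x => (∫ t in Set.Ioc 2 x, g1 t * t) * ((Real.log x) ^ 2 / x)) atTop (𝓝 0) := by
  apply squeeze_zero' (g := fun x => Real.sqrt x * (2 / (Real.log 2) ^ 3) *
      ((Real.log x) ^ 2 / x) + 16 / Real.log x)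
  · filter_upwards [eventually_ge_atTop (2:ℝ)] with x hx
    have h1 : 0 ≤ ∫ t in Set.Ioc 2 x, g1 t * t :=
      setIntegral_nonneg measurableSet_Ioc fun t ht => g1_mul_nonneg (by linarith [ht.1])
    have h2 : 0 ≤ (Real.log x) ^ 2 / x := by positivity
    exact mul_nonneg h1 h2
  · filter_upwards [eventually_ge_atTop (4:ℝ)] with x hx
    have hx0 : (0:ℝ) < x := by linarith
    have hlogx : 0 < Real.log x := Real.log_pos (by linarith)
    have h2 : 0 ≤ (Real.log x) ^ 2 / x := by positivity
    have := mul_le_mul_of_nonneg_right (J_le hx) h2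
    refine this.trans_eq ?_
    rw [add_mul]
    congr 1
    field_simp
  · have := tendsto_sqrt_term.add tendsto_inv_log
    simpa using this

lemma li2'_asymp : Tendsto (fun x => li2' x * ((Real.log x) ^ 2 / x)) atTop (𝓝 1) := by
  have hmain : Tendsto (fun x => 1 - 2 * ((Real.log 2) ^ 2)⁻¹ * ((Real.log x) ^ 2 / x)
      + (∫ t in Set.Ioc 2 x, g1 t * t) * ((Real.log x) ^ 2 / x)) atTop (𝓝 1) := by
    have h1 := tendsto_logsq_div.const_mul (2 * ((Real.log 2) ^ 2)⁻¹)
    rw [mul_zero] at h1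
    have h2 := (tendsto_const_nhds (x := (1:ℝ)) (f := atTop)).sub h1
    rw [sub_zero] at h2
    have h3 := h2.add J_asymp
    rw [add_zero] at h3
    exact h3
  refine hmain.congr' ?_
  filter_upwards [eventually_ge_atTop (3:ℝ)] with x hx
  have hx0 : x ≠ 0 := by positivity
  have hlog : Real.log x ≠ 0 := (Real.log_pos (by linarith)).ne'
  rw [li2'_identity (by linarith : (2:ℝ) ≤ x)]
  field_simp

lemma li2'_atTop : Tendsto li2' atTop atTop := by
  have hx_div : Tendsto (fun x : ℝ => x / (Real.log x) ^ 2) atTop atTop := by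
    have h0 : Tendsto (fun x : ℝ => (Real.log x) ^ 2 / x) atTop (𝓝[>] 0) := by
      rw [tendsto_nhdsWithin_iff]
      refine ⟨tendsto_logsq_div, ?_⟩
      filter_upwards [eventually_ge_atTop (3:ℝ)] with x hx
      have hlog : 0 < Real.log x := Real.log_pos (by linarith)
      have hx0 : (0:ℝ) < x := by linarith
      exact Set.mem_Ioi.mpr (by positivity)
    have := h0.inv_tendsto_nhdsGT_zero
    refine this.congr' ?_
    filter_upwards [eventually_ge_atTop (3:ℝ)] with x hx
    rw [Pi.inv_apply, inv_div]
  have hmul := li2'_asymp.pos_mul_atTop one_pos hx_div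
  refine hmul.congr' ?_
  filter_upwards [eventually_ge_atTop (3:ℝ)] with x hx
  have hx0 : x ≠ 0 := by positivity
  have hlog : Real.log x ≠ 0 := (Real.log_pos (by linarith)).ne'
  field_simp

lemma li2'_pos {x : ℝ} (hx : 2 < x) : 0 < li2' x := by
  rw [li2']
  apply intervalIntegral.intervalIntegral_pos_of_pos_on
  · apply ContinuousOn.intervalIntegrable
    intro s hs
    rw [Set.uIcc_of_le hx.le] at hs
    have h1 : (1:ℝ) < s := by linarith [hs.1]
    have h0 : s ≠ 0 := by positivity
    exact ContinuousAt.continuousWithinAt <| continuousAt_const.div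
      ((Real.continuousAt_log h0).pow 2) (pow_ne_zero 2 (log_pos_of_gt_one h1).ne')
  · intro t ht
    have h1 : (1:ℝ) < t := by linarith [ht.1]
    have := log_pos_of_gt_one h1
    positivity
  · exact hx

/-! ### The concrete counting functions -/

section Concrete

variable (k : ℕ) (r : ℤ)

/-- the predicate -/
def Q (n : ℕ) : Prop := n.Prime ∧ ((n : ℤ) ^ k + 2 * r).toNat.Prime

instance : DecidablePred (Q k r) := fun _ => instDecidableAnd

/-- weighted coefficients -/
noncomputable def ct (n : ℕ) : ℝ := if Q k r n then (Real.log n) ^ 2 else 0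

/-- counting coefficients -/
noncomputable def cp (n : ℕ) : ℝ := if Q k r n then 1 else 0

lemma ct_nonneg : ∀ n, 0 ≤ ct k r n := fun n => by
  rw [ct]; split <;> positivity

lemma cp_nonneg : ∀ n, 0 ≤ cp k r n := fun n => by
  rw [cp]; split <;> norm_num

lemma Q_two_le {n : ℕ} (h : Q k r n) : 2 ≤ n := h.1.two_le

lemma ct_zero : ct k r 0 = 0 := by
  rw [ct, if_neg]; rintro ⟨h, -⟩; exact Nat.not_prime_zero h

lemma ct_one : ct k r 1 = 0 := by
  rw [ct, if_neg]; rintro ⟨h, -⟩; exact Nat.not_prime_one h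

lemma cp_zero : cp k r 0 = 0 := by
  rw [cp, if_neg]; rintro ⟨h, -⟩; exact Nat.not_prime_zero h

lemma cp_one : cp k r 1 = 0 := by
  rw [cp, if_neg]; rintro ⟨h, -⟩; exact Nat.not_prime_one h

lemma sum_Icc01_ct : ∑ n ∈ Finset.Icc 0 1, ct k r n = 0 := by
  rw [show Finset.Icc 0 1 = {0, 1} by rfl]
  simp [ct_zero, ct_one]

lemma sum_Icc01_cp : ∑ n ∈ Finset.Icc 0 1, cp k r n = 0 := by
  rw [show Finset.Icc 0 1 = {0, 1} by rfl]
  simp [cp_zero, cp_one]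

lemma sum_Icc_split (c : ℕ → ℝ) {m : ℕ} (hm : 1 ≤ m) :
    ∑ n ∈ Finset.Icc 0 m, c n = (∑ n ∈ Finset.Icc 0 1, c n) + ∑ n ∈ Finset.Ioc 1 m, c n := by
  have h1 : Finset.Icc 0 m = Finset.Ico 0 (m + 1) := (Finset.Ico_add_one_right_eq_Icc 0 m).symm
  have h2 : Finset.Icc 0 1 = Finset.Ico 0 2 := rfl
  have h3 : Finset.Ioc 1 m = Finset.Ico 2 (m + 1) := by
    ext n
    simp only [Finset.mem_Ioc, Finset.mem_Ico]
    omega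
  rw [h1, h2, h3, Finset.sum_Ico_consecutive _ (by omega) (by omega)]

lemma floor_three_halves : ⌊(3/2 : ℝ)⌋₊ = 1 := by
  rw [Nat.floor_eq_iff] <;> norm_num

/-- Abel summation: `π` in terms of `θ`. -/
lemma abel_pi {x : ℝ} (hx : 2 ≤ x) :
    S (cp k r) x = ((Real.log x) ^ 2)⁻¹ * S (ct k r) x
      + ∫ t in Set.Ioc 2 x, g1 t * S (ct k r) t := by
  have h32x : (3/2 : ℝ) ≤ x := by linarith
  have hf_diff : ∀ t ∈ Set.Icc (3/2 : ℝ) x,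
      DifferentiableAt ℝ (fun t => ((Real.log t) ^ 2)⁻¹) t := by
    intro t ht
    exact (hasDerivAt_invlogsq (by linarith [ht.1] : (1:ℝ) < t)).differentiableAt
  have hderiv_eq : ∀ t ∈ Set.Icc (3/2 : ℝ) x,
      deriv (fun t => ((Real.log t) ^ 2)⁻¹) t = -(g1 t) := by
    intro t ht
    exact (hasDerivAt_invlogsq (by linarith [ht.1] : (1:ℝ) < t)).deriv
  have hf_int : IntegrableOn (deriv (fun t => ((Real.log t) ^ 2)⁻¹)) (Set.Icc (3/2) x) := by
    refine (((continuousOn_g1 (by norm_num : (1:ℝ) < 3/2)).neg).integrableOn_compact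
      isCompact_Icc).congr_fun ?_ measurableSet_Icc
    intro t ht
    exact (hderiv_eq t ht).symm
  have habel := sum_mul_eq_sub_sub_integral_mul (ct k r) (by norm_num : (0:ℝ) ≤ 3/2) h32x
    hf_diff hf_int
  rw [floor_three_halves] at habel
  -- LHS of Abel is S (cp k r) x
  have hfloorx : 1 ≤ ⌊x⌋₊ := by
    have : (1:ℕ) ≤ ⌊x⌋₊ := Nat.le_floor (by norm_num; linarith)
    exact this
  have hLHS : ∑ n ∈ Finset.Ioc 1 ⌊x⌋₊, ((Real.log n) ^ 2)⁻¹ * ct k r n = S (cp k r) x := by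
    rw [S, sum_Icc_split _ hfloorx, sum_Icc01_cp, zero_add]
    refine Finset.sum_congr rfl fun n hn => ?_
    rw [Finset.mem_Ioc] at hn
    have hn2 : 2 ≤ n := hn.1
    have hlog : Real.log n ≠ 0 := by
      refine (Real.log_pos ?_).ne'
      exact_mod_cast Nat.lt_of_lt_of_le one_lt_two hn2
    rw [ct, cp]
    split
    · rw [inv_mul_cancel₀ (pow_ne_zero 2 hlog)]
    · rw [mul_zero]
  rw [hLHS, sum_Icc01_ct, mul_zero, sub_zero] at habel
  have hS0 : S (ct k r) x = ∑ n ∈ Finset.Icc 0 ⌊x⌋₊, ct k r n := rfl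
  have hint_int : IntegrableOn (fun t => g1 t * S (ct k r) t) (Set.Ioc (3/2) x) :=
    integrableOn_mul_S (ct k r) (ct_nonneg k r) (continuousOn_g1 (by norm_num))
  have hint_eq : (∫ t in Set.Ioc (3/2 : ℝ) x,
        deriv (fun t => ((Real.log t) ^ 2)⁻¹) t * ∑ n ∈ Finset.Icc 0 ⌊t⌋₊, ct k r n)
      = - ∫ t in Set.Ioc 2 x, g1 t * S (ct k r) t := by
    have e1 : Set.EqOn
        (fun t => deriv (fun t => ((Real.log t) ^ 2)⁻¹) t * ∑ n ∈ Finset.Icc 0 ⌊t⌋₊, ct k r n)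
        (fun t => -(g1 t * S (ct k r) t)) (Set.Ioc (3/2) x) := by
      intro t ht
      have := hderiv_eq t (Set.Ioc_subset_Icc_self ht)
      simp only [this, S, neg_mul]
    rw [setIntegral_congr_fun measurableSet_Ioc e1, integral_neg, neg_inj]
    have hsplit : (∫ t in Set.Ioc (3/2 : ℝ) x, g1 t * S (ct k r) t)
        = (∫ t in Set.Ioc (3/2 : ℝ) 2, g1 t * S (ct k r) t)
          + ∫ t in Set.Ioc (2:ℝ) x, g1 t * S (ct k r) t := by
      rw [← setIntegral_union (Set.Ioc_disjoint_Ioc_of_le le_rfl) measurableSet_Ioc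
        (hint_int.mono_set (Set.Ioc_subset_Ioc_right hx))
        (hint_int.mono_set (Set.Ioc_subset_Ioc_left (by norm_num))),
        Set.Ioc_union_Ioc_eq_Ioc (by norm_num) hx]
    have hzero : (∫ t in Set.Ioc (3/2 : ℝ) 2, g1 t * S (ct k r) t) = 0 := by
      have hae : ∀ᵐ t : ℝ, t ≠ 2 := by
        rw [ae_iff]
        simp only [not_not, Set.setOf_eq_eq_singleton]
        exact measure_singleton 2
      rw [← integral_zero ℝ ℝ (μ := volume.restrict (Set.Ioc (3/2 : ℝ) 2))]
      refine setIntegral_congr_ae measurableSet_Ioc ?_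
      filter_upwards [hae] with t ht2 htmem
      have : t < 2 := lt_of_le_of_ne htmem.2 ht2
      rw [S_eq_zero (ct k r) (ct_zero k r) (ct_one k r) this, mul_zero]
    rw [hsplit, hzero, zero_add]
  rw [hint_eq] at habel
  rw [← hS0] at habel
  show S (cp k r) x = _
  rw [habel]
  ring

/-- Abel summation: `θ` in terms of `π`. -/
lemma abel_theta {x : ℝ} (hx : 2 ≤ x) :
    S (ct k r) x = (Real.log x) ^ 2 * S (cp k r) x
      - ∫ t in Set.Ioc 2 x, g2 t * S (cp k r) t := by
  have hf_diff : ∀ t ∈ Set.Icc (1:ℝ) x, DifferentiableAt ℝ (fun t => (Real.log t) ^ 2) t := by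
    intro t ht
    exact (hasDerivAt_logsq (by linarith [ht.1] : (0:ℝ) < t)).differentiableAt
  have hderiv_eq : ∀ t ∈ Set.Icc (1:ℝ) x, deriv (fun t => (Real.log t) ^ 2) t = g2 t := by
    intro t ht
    exact (hasDerivAt_logsq (by linarith [ht.1] : (0:ℝ) < t)).deriv
  have hf_int : IntegrableOn (deriv (fun t => (Real.log t) ^ 2)) (Set.Icc 1 x) := by
    refine ((continuousOn_g2 one_pos).integrableOn_compact isCompact_Icc).congr_fun ?_
      measurableSet_Icc
    intro t ht
    exact (hderiv_eq t ht).symm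
  have habel := sum_mul_eq_sub_integral_mul₀ (cp k r) (cp_zero k r) x hf_diff hf_int
  have hLHS : ∑ n ∈ Finset.Icc 0 ⌊x⌋₊, (Real.log n) ^ 2 * cp k r n = S (ct k r) x := by
    refine Finset.sum_congr rfl fun n _ => ?_
    rw [ct, cp]
    split
    · rw [mul_one]
    · rw [mul_zero]
  have hint_int : IntegrableOn (fun t => g2 t * S (cp k r) t) (Set.Ioc 1 x) :=
    integrableOn_mul_S (cp k r) (cp_nonneg k r) (continuousOn_g2 one_pos)
  have hint_eq : (∫ t in Set.Ioc (1:ℝ) x,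
        deriv (fun t => (Real.log t) ^ 2) t * ∑ n ∈ Finset.Icc 0 ⌊t⌋₊, cp k r n)
      = ∫ t in Set.Ioc 2 x, g2 t * S (cp k r) t := by
    have e1 : Set.EqOn
        (fun t => deriv (fun t => (Real.log t) ^ 2) t * ∑ n ∈ Finset.Icc 0 ⌊t⌋₊, cp k r n)
        (fun t => g2 t * S (cp k r) t) (Set.Ioc 1 x) := by
      intro t ht
      have := hderiv_eq t (Set.Ioc_subset_Icc_self ht)
      simp only [this, S]
    rw [setIntegral_congr_fun measurableSet_Ioc e1]
    have hsplit : (∫ t in Set.Ioc (1:ℝ) x, g2 t * S (cp k r) t)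
        = (∫ t in Set.Ioc (1:ℝ) 2, g2 t * S (cp k r) t)
          + ∫ t in Set.Ioc (2:ℝ) x, g2 t * S (cp k r) t := by
      rw [← setIntegral_union (Set.Ioc_disjoint_Ioc_of_le le_rfl) measurableSet_Ioc
        (hint_int.mono_set (Set.Ioc_subset_Ioc_right hx))
        (hint_int.mono_set (Set.Ioc_subset_Ioc_left one_le_two)),
        Set.Ioc_union_Ioc_eq_Ioc one_le_two hx]
    have hzero : (∫ t in Set.Ioc (1:ℝ) 2, g2 t * S (cp k r) t) = 0 := by
      have hae : ∀ᵐ t : ℝ, t ≠ 2 := by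
        rw [ae_iff]
        simp only [not_not, Set.setOf_eq_eq_singleton]
        exact measure_singleton 2
      rw [← integral_zero ℝ ℝ (μ := volume.restrict (Set.Ioc (1:ℝ) 2))]
      refine setIntegral_congr_ae measurableSet_Ioc ?_
      filter_upwards [hae] with t ht2 htmem
      have : t < 2 := lt_of_le_of_ne htmem.2 ht2
      rw [S_eq_zero (cp k r) (cp_zero k r) (cp_one k r) this, mul_zero]
    rw [hsplit, hzero, zero_add]
  rw [hLHS, hint_eq] at habel
  exact habel

lemma tendsto_two_div_log : Tendsto (fun t : ℝ => 2 * (Real.log t)⁻¹) atTop (𝓝 0) := by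
  have h := Real.tendsto_log_atTop.inv_tendsto_atTop.const_mul (2:ℝ)
  rwa [mul_zero] at h

lemma integrableOn_w {x : ℝ} : IntegrableOn (fun t => ((Real.log t) ^ 2)⁻¹) (Set.Ioc 2 x) := by
  rcases le_or_gt (2:ℝ) x with h | h
  · exact ((continuousOn_invlogsq one_lt_two).integrableOn_compact
      isCompact_Icc).mono_set Set.Ioc_subset_Icc_self
  · rw [Set.Ioc_eq_empty (not_lt.mpr h.le)]
    exact integrableOn_empty

/-- Direction 1: `θ(x)/x → C` implies `π(x)/li₂(x) → C`. -/
lemma dir1 (C : ℝ) (hθ : Tendsto (fun x => S (ct k r) x / x) atTop (𝓝 C)) :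
    Tendsto (fun x => S (cp k r) x / li2' x) atTop (𝓝 C) := by
  have hδ : Tendsto (fun x => S (ct k r) x / x - C) atTop (𝓝 0) := by
    have := hθ.sub (tendsto_const_nhds (x := C))
    rwa [sub_self] at this
  -- integrability of the error integrand
  have hint1 : ∀ x : ℝ, IntegrableOn (fun t => g1 t * (S (ct k r) t - C * t))
      (Set.Ioc 2 x) := by
    intro x
    have h1 : IntegrableOn (fun t => g1 t * S (ct k r) t) (Set.Ioc 2 x) :=
      integrableOn_mul_S (ct k r) (ct_nonneg k r) (continuousOn_g1 one_lt_two)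
    have h2 : IntegrableOn (fun t => C * (g1 t * t)) (Set.Ioc 2 x) :=
      integrableOn_g1_mul.const_mul C
    exact IntegrableOn.congr_fun (h1.sub h2) (fun t _ => by simp only [Pi.sub_apply]; ring)
      measurableSet_Ioc
  -- the main identity
  have hE : ∀ x : ℝ, 2 ≤ x → S (cp k r) x - C * li2' x
      = ((Real.log x) ^ 2)⁻¹ * (S (ct k r) x - C * x)
        + (∫ t in Set.Ioc 2 x, g1 t * (S (ct k r) t - C * t))
        + 2 * C * ((Real.log 2) ^ 2)⁻¹ := by
    intro x hx
    have h1 := abel_pi k r hx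
    have h2 := li2'_identity hx
    have h3 : (∫ t in Set.Ioc 2 x, g1 t * (S (ct k r) t - C * t))
        = (∫ t in Set.Ioc 2 x, g1 t * S (ct k r) t)
          - C * ∫ t in Set.Ioc 2 x, g1 t * t := by
      rw [← integral_const_mul]
      rw [← integral_sub (integrableOn_mul_S (ct k r) (ct_nonneg k r)
        (continuousOn_g1 one_lt_two)) (integrableOn_g1_mul.const_mul C)]
      exact setIntegral_congr_ae measurableSet_Ioc (.of_forall fun t _ => by ring)
    rw [h1, h2, h3]
    ring
  -- each error term tends to 0 after division by li2'
  have hA : Tendsto (fun x => ((Real.log x) ^ 2)⁻¹ * (S (ct k r) x - C * x) / li2' x)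
      atTop (𝓝 0) := by
    have h2 : Tendsto (fun x => (li2' x * ((Real.log x) ^ 2 / x))⁻¹) atTop (𝓝 1) := by
      have := li2'_asymp.inv₀ one_ne_zero
      rwa [inv_one] at this
    have h3 := hδ.mul h2
    rw [zero_mul] at h3
    refine h3.congr' ?_
    filter_upwards [eventually_gt_atTop (3:ℝ)] with x hx
    have hx0 : x ≠ 0 := by positivity
    have hlog : Real.log x ≠ 0 := (Real.log_pos (by linarith)).ne'
    have hli : li2' x ≠ 0 := (li2'_pos (by linarith)).ne'
    field_simp
  have hB : Tendsto (fun x => (∫ t in Set.Ioc 2 x, g1 t * (S (ct k r) t - C * t)) / li2' x)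
      atTop (𝓝 0) := by
    have hkey := key (fun t => (S (ct k r) t / t - C) * (2 * (Real.log t)⁻¹))
      (fun t => ((Real.log t) ^ 2)⁻¹) li2'
      (fun t => by positivity)
      (fun x => integrableOn_w)
      ?huint ?hbound li2'_atTop ?hu
    · refine hkey.congr fun x => ?_
      congr 1
      refine setIntegral_congr_fun measurableSet_Ioc fun t ht => ?_
      have ht2 : (2:ℝ) < t := ht.1
      have ht0 : t ≠ 0 := by positivity
      have hlt : Real.log t ≠ 0 := (Real.log_pos (by linarith)).ne'
      rw [g1]
      field_simp
    case huint =>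
      intro x
      refine IntegrableOn.congr_fun (hint1 x) (fun t ht => ?_) measurableSet_Ioc
      have ht2 : (2:ℝ) < t := ht.1
      have ht0 : t ≠ 0 := by positivity
      have hlt : Real.log t ≠ 0 := (Real.log_pos (by linarith)).ne'
      rw [g1]
      field_simp
    case hbound =>
      intro T x hT hTx
      have hx : (2:ℝ) ≤ x := hT.trans hTx
      rw [li2'_eq_setIntegral hx]
      refine setIntegral_mono_set integrableOn_w ?_ ?_
      · exact .of_forall fun t => by positivity
      · exact (Set.Ioc_subset_Ioc_left hT).eventuallyLE
    case hu =>
      have h := hδ.mul tendsto_two_div_log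
      rw [zero_mul] at h
      refine h.congr fun t => rfl
  have hD : Tendsto (fun x => 2 * C * ((Real.log 2) ^ 2)⁻¹ / li2' x) atTop (𝓝 0) := by
    have h := li2'_atTop.inv_tendsto_atTop.const_mul (2 * C * ((Real.log 2) ^ 2)⁻¹)
    rw [mul_zero] at h
    exact h.congr fun x => by rw [div_eq_mul_inv, Pi.inv_apply]
  have hsum := (hA.add hB).add hD
  rw [add_zero, add_zero] at hsum
  have hE2 : Tendsto (fun x => S (cp k r) x / li2' x - C) atTop (𝓝 0) := by
    refine hsum.congr' ?_
    filter_upwards [eventually_gt_atTop (2:ℝ)] with x hx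
    have hli : li2' x ≠ 0 := (li2'_pos hx).ne'
    have := hE x hx.le
    rw [← add_div, ← add_div, ← this, sub_div, mul_div_assoc,
      div_self hli, mul_one]
  have := hE2.add (tendsto_const_nhds (x := C))
  rw [zero_add] at this
  refine this.congr fun x => by ring

/-- Direction 2: `π(x)/li₂(x) → C` implies `θ(x)/x → C`. -/
lemma dir2 (C : ℝ) (hπ : Tendsto (fun x => S (cp k r) x / li2' x) atTop (𝓝 C)) :
    Tendsto (fun x => S (ct k r) x / x) atTop (𝓝 C) := by
  have hη : Tendsto (fun x => S (cp k r) x / li2' x - C) atTop (𝓝 0) := by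
    have := hπ.sub (tendsto_const_nhds (x := C))
    rwa [sub_self] at this
  have hli2cont : ∀ x : ℝ, ContinuousOn li2' (Set.Icc 2 x) := fun x t ht =>
    (li2'_continuousAt (by linarith [ht.1] : (1:ℝ) < t)).continuousWithinAt
  have hint1 : ∀ x : ℝ, IntegrableOn (fun t => g2 t * (S (cp k r) t - C * li2' t))
      (Set.Ioc 2 x) := by
    intro x
    rcases le_or_gt (2:ℝ) x with h | h
    · have h1 : IntegrableOn (fun t => g2 t * S (cp k r) t) (Set.Ioc 2 x) :=
        integrableOn_mul_S (cp k r) (cp_nonneg k r) (continuousOn_g2 two_pos)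
      have h2 : IntegrableOn (fun t => C * (g2 t * li2' t)) (Set.Ioc 2 x) := by
        refine (Integrable.const_mul ?_ C)
        exact (((continuousOn_g2 two_pos).mul (hli2cont x)).integrableOn_compact
          isCompact_Icc).mono_set Set.Ioc_subset_Icc_self
      exact IntegrableOn.congr_fun (h1.sub h2) (fun t _ => by simp only [Pi.sub_apply]; ring)
        measurableSet_Ioc
    · rw [Set.Ioc_eq_empty (not_lt.mpr h.le)]
      exact integrableOn_empty
  -- main identity
  have hE : ∀ x : ℝ, 2 ≤ x → S (ct k r) x - C * x
      = (Real.log x) ^ 2 * (S (cp k r) x - C * li2' x)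
        - (∫ t in Set.Ioc 2 x, g2 t * (S (cp k r) t - C * li2' t))
        - 2 * C := by
    intro x hx
    have h1 := abel_theta k r hx
    have h2 := li2'_id2 hx
    have h3 : (∫ t in Set.Ioc 2 x, g2 t * (S (cp k r) t - C * li2' t))
        = (∫ t in Set.Ioc 2 x, g2 t * S (cp k r) t)
          - C * ∫ t in Set.Ioc 2 x, g2 t * li2' t := by
      rw [← integral_const_mul]
      rw [← integral_sub (integrableOn_mul_S (cp k r) (cp_nonneg k r)
        (continuousOn_g2 two_pos)) (show IntegrableOn (fun t => C * (g2 t * li2' t)) (Set.Ioc 2 x) volume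
          from Integrable.const_mul ((((continuousOn_g2 two_pos).mul
          (hli2cont x)).integrableOn_compact isCompact_Icc).mono_set
          Set.Ioc_subset_Icc_self) C)]
      exact setIntegral_congr_ae measurableSet_Ioc (.of_forall fun t _ => by ring)
    rw [h1, h3]
    have : C * x - 2 * C = C * ((Real.log x) ^ 2 * li2' x
        - ∫ t in Set.Ioc 2 x, g2 t * li2' t) := by
      rw [h2]; ring
    linarith [this]
  -- error terms over x
  have hA : Tendsto (fun x => (Real.log x) ^ 2 * (S (cp k r) x - C * li2' x) / x)
      atTop (𝓝 0) := by
    have h3 := hη.mul li2'_asymp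
    rw [zero_mul] at h3
    refine h3.congr' ?_
    filter_upwards [eventually_gt_atTop (3:ℝ)] with x hx
    have hx0 : x ≠ 0 := by positivity
    have hli : li2' x ≠ 0 := (li2'_pos (by linarith)).ne'
    field_simp
  have hB : Tendsto (fun x => (∫ t in Set.Ioc 2 x, g2 t * (S (cp k r) t - C * li2' t)) / x)
      atTop (𝓝 0) := by
    have hkey := key (fun t => g2 t * (S (cp k r) t - C * li2' t))
      (fun _ => (1:ℝ)) (fun x => x)
      (fun t => zero_le_one)
      (fun x => integrableOn_const measure_Ioc_lt_top.ne)
      ?huint ?hbound tendsto_id ?hu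
    · refine hkey.congr fun x => ?_
      congr 1
      exact setIntegral_congr_ae measurableSet_Ioc (.of_forall fun t _ => (mul_one _))
    case huint =>
      intro x
      exact IntegrableOn.congr_fun (hint1 x) (fun t _ => (mul_one _).symm) measurableSet_Ioc
    case hbound =>
      intro T x hT hTx
      rw [setIntegral_const, Real.volume_real_Ioc_of_le (by linarith), smul_eq_mul,
        mul_one]
      linarith
    case hu =>
      -- g2 t * (π t - C li2' t) = (π/li2' - C) * (li2' * log²t/t) * (2/log t)
      have hfac : Tendsto (fun t : ℝ => (S (cp k r) t / li2' t - C)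
          * (li2' t * ((Real.log t) ^ 2 / t) * (2 * (Real.log t)⁻¹))) atTop (𝓝 0) := by
        have h2 := li2'_asymp.mul tendsto_two_div_log
        rw [mul_zero] at h2
        have h3 := hη.mul h2
        rw [zero_mul] at h3
        exact h3.congr fun t => by ring
      refine hfac.congr' ?_
      filter_upwards [eventually_gt_atTop (3:ℝ)] with t ht
      have ht0 : t ≠ 0 := by positivity
      have hlt : Real.log t ≠ 0 := (Real.log_pos (by linarith)).ne'
      have hli : li2' t ≠ 0 := (li2'_pos (by linarith)).ne'
      rw [g2]
      field_simp
  have hD : Tendsto (fun x : ℝ => 2 * C / x) atTop (𝓝 0) := by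
    have h := tendsto_inv_atTop_zero.const_mul (2 * C)
    rw [mul_zero] at h
    exact h.congr fun x => by rw [div_eq_mul_inv]
  have hsum := (hA.sub hB).sub hD
  rw [sub_zero, sub_zero] at hsum
  have hE2 : Tendsto (fun x => S (ct k r) x / x - C) atTop (𝓝 0) := by
    refine hsum.congr' ?_
    filter_upwards [eventually_gt_atTop (2:ℝ)] with x hx
    have hx0 : x ≠ 0 := by positivity
    rw [div_sub_div_same, div_sub_div_same, ← hE x hx.le, sub_div, mul_div_assoc,
      div_self hx0, mul_one]
  have := hE2.add (tendsto_const_nhds (x := C))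
  rw [zero_add] at this
  refine this.congr fun x => by ring

end Concrete

end ThetaPiAux

namespace ThetaPiAux

lemma li2_eq_li2' : li2 = li2' := rfl

lemma range_succ_floor (m : ℕ) : Finset.range (m + 1) = Finset.Icc 0 m := by
  rw [Finset.range_eq_Ico, Finset.Ico_add_one_right_eq_Icc]

lemma theta_eq (k : ℕ) (r : ℤ) (x : ℝ) : primePairTheta k r x = S (ct k r) x := by
  rw [primePairTheta, S, Finset.sum_filter]
  refine Finset.sum_congr (range_succ_floor _) fun n _ => ?_
  simp only [ct, Q]

lemma count_eq (k : ℕ) (r : ℤ) (x : ℝ) : (primePairCount k r x : ℝ) = S (cp k r) x := by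
  rw [primePairCount, S, Finset.card_eq_sum_ones, Nat.cast_sum, Finset.sum_filter]
  refine Finset.sum_congr (range_succ_floor _) fun n _ => ?_
  simp only [cp, Q]
  by_cases h : n.Prime ∧ ((n : ℤ) ^ k + 2 * r).toNat.Prime
  · rw [if_pos h, Nat.cast_one]; exact (if_pos h).symm
  · rw [if_neg h]; exact (if_neg h).symm

end ThetaPiAux

/-- For `k ≥ 1`, nonzero `r` and `C ≥ 0`: `θ^k_{2r}(x)/x → C` as `x → ∞` if and only if
`π^k_{2r}(x)/li₂(x) → C` as `x → ∞`. -/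
theorem theta_asymptotic_iff_pi_asymptotic (k : ℕ) (hk : 1 ≤ k) (r : ℤ) (hr : r ≠ 0)
    (C : ℝ) (hC : 0 ≤ C) :
    Tendsto (fun x : ℝ => primePairTheta k r x / x) atTop (𝓝 C) ↔
      Tendsto (fun x : ℝ => (primePairCount k r x : ℝ) / li2 x) atTop (𝓝 C) := by
  constructor
  · intro h
    have h' := ThetaPiAux.dir1 k r C (h.congr fun x => by rw [ThetaPiAux.theta_eq])
    exact h'.congr fun x => by rw [← ThetaPiAux.count_eq, ThetaPiAux.li2_eq_li2']
  · intro h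
    have h' := ThetaPiAux.dir2 k r C
      (h.congr fun x => by rw [ThetaPiAux.count_eq, ThetaPiAux.li2_eq_li2'])
    exact h'.congr fun x => by rw [ThetaPiAux.theta_eq]
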